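/- Let N be a finite set and let g : 2^N → ℝ be a supermodular set function, with increment function ρ(i,S) = g(S ∪ {i}) − g(S). Then for all subsets S, T ⊆ N: (1) g(T) ≥ g(S) + Σ_{i ∈ T\S} ρ(i,S) − Σ_{i ∈ S\T} ρ(i, N\{i}); and (2) g(T) ≥ g(S) + Σ_{i ∈ T\S} ρ(i,∅) − Σ_{i ∈ S\T} ρ(i, S\{i}). -/

import Mathlib

open Finset

private lemma lb_aux {ι : Type*} [DecidableEq ι] (g : Finset ι → ℝ)
    (hsup : ∀ (i : ι) (S T : Finset ι), S ⊆ T → i ∉ T →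
      g (insert i S) - g S ≤ g (insert i T) - g T) :
    ∀ (A S : Finset ι), Disjoint A S →
      (∑ i ∈ A, (g (insert i S) - g S)) ≤ g (S ∪ A) - g S := by
  intro A
  induction A using Finset.induction with
  | empty => intro S _; simp
  | insert a A' ha IH =>
    intro S hdis
    rw [Finset.sum_insert ha]
    have hdis' : Disjoint A' S := (Finset.disjoint_insert_left.mp hdis).2
    have haS : a ∉ S := (Finset.disjoint_insert_left.mp hdis).1
    have haSA : a ∉ S ∪ A' := by simp [haS, ha]
    have h1 := hsup a S (S ∪ A') Finset.subset_union_left haSA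
    have h2 := IH S hdis'
    have : S ∪ insert a A' = insert a (S ∪ A') := by
      ext x; simp [or_comm, or_left_comm]
    rw [this]
    linarith

private lemma ub_aux {ι : Type*} [DecidableEq ι] (g : Finset ι → ℝ)
    (hsup : ∀ (i : ι) (S T : Finset ι), S ⊆ T → i ∉ T →
      g (insert i S) - g S ≤ g (insert i T) - g T) :
    ∀ (A S : Finset ι), Disjoint A S →
      g (S ∪ A) - g S ≤
        ∑ i ∈ A, (g (insert i ((S ∪ A) \ {i})) - g ((S ∪ A) \ {i})) := by
  intro A
  induction A using Finset.induction with
  | empty => intro S _; simp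
  | insert a A' ha IH =>
    intro S hdis
    rw [Finset.sum_insert ha]
    have hdis' : Disjoint A' S := (Finset.disjoint_insert_left.mp hdis).2
    have haS : a ∉ S := (Finset.disjoint_insert_left.mp hdis).1
    have hU : S ∪ insert a A' = insert a (S ∪ A') := by
      ext x; simp [or_comm, or_left_comm]
    have hUa : (S ∪ insert a A') \ {a} = S ∪ A' := by
      rw [hU]
      ext x
      simp only [Finset.mem_sdiff, Finset.mem_insert, Finset.mem_singleton,
        Finset.mem_union]
      constructor
      · rintro ⟨h1 | h1, h2⟩
        · exact absurd h1 h2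
        · exact h1
      · intro h
        refine ⟨Or.inr h, ?_⟩
        rintro rfl
        rcases h with h | h
        · exact haS h
        · exact ha h
    have h2 := IH S hdis'
    have hsum : ∑ i ∈ A', (g (insert i ((S ∪ A') \ {i})) - g ((S ∪ A') \ {i})) ≤
        ∑ i ∈ A', (g (insert i ((S ∪ insert a A') \ {i})) - g ((S ∪ insert a A') \ {i})) := by
      apply Finset.sum_le_sum
      intro i hi
      apply hsup
      · intro x hx
        simp only [Finset.mem_sdiff, Finset.mem_union, Finset.mem_insert] at *
        exact ⟨by tauto, hx.2⟩
      · simp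
    have h1 : g (S ∪ A') = g ((S ∪ insert a A') \ {a}) := by rw [hUa]
    have h3 : g (S ∪ insert a A') = g (insert a ((S ∪ insert a A') \ {a})) := by
      rw [hUa, hU]
    linarith

theorem stmt_0 {ι : Type*} [Fintype ι] [DecidableEq ι] (g : Finset ι → ℝ)
    (hsup : ∀ (i : ι) (S T : Finset ι), S ⊆ T → i ∉ T →
      g (insert i S) - g S ≤ g (insert i T) - g T)
    (S T : Finset ι) :
    (g S + (∑ i ∈ T \ S, (g (insert i S) - g S))
        - ∑ i ∈ S \ T, (g (insert i (Finset.univ \ {i})) - g (Finset.univ \ {i})) ≤ g T)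
    ∧ (g S + (∑ i ∈ T \ S, (g (insert i ∅) - g ∅))
        - ∑ i ∈ S \ T, (g (insert i (S \ {i})) - g (S \ {i})) ≤ g T) := by
  constructor
  · -- part 1, via S ∪ T
    have h1 : (∑ i ∈ T \ S, (g (insert i S) - g S)) ≤ g (S ∪ (T \ S)) - g S :=
      lb_aux g hsup (T \ S) S (Finset.sdiff_disjoint)
    have h2 : g (T ∪ (S \ T)) - g T ≤
        ∑ i ∈ S \ T, (g (insert i ((T ∪ (S \ T)) \ {i})) - g ((T ∪ (S \ T)) \ {i})) :=
      ub_aux g hsup (S \ T) T (Finset.sdiff_disjoint)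
    have heq : S ∪ (T \ S) = T ∪ (S \ T) := by
      rw [Finset.union_sdiff_self_eq_union, Finset.union_sdiff_self_eq_union,
        Finset.union_comm]
    have h3 : ∑ i ∈ S \ T, (g (insert i ((T ∪ (S \ T)) \ {i})) - g ((T ∪ (S \ T)) \ {i})) ≤
        ∑ i ∈ S \ T, (g (insert i (Finset.univ \ {i})) - g (Finset.univ \ {i})) := by
      apply Finset.sum_le_sum
      intro i _
      apply hsup
      · exact Finset.sdiff_subset_sdiff (Finset.subset_univ _) (le_refl _)
      · simp
    rw [heq] at h1
    linarith
  · -- part 2, via S ∩ T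
    have h1 : (∑ i ∈ T \ S, (g (insert i (S ∩ T)) - g (S ∩ T))) ≤
        g ((S ∩ T) ∪ (T \ S)) - g (S ∩ T) := by
      apply lb_aux g hsup
      rw [Finset.disjoint_left]
      intro x hx hx'
      simp only [Finset.mem_sdiff, Finset.mem_inter] at *
      exact hx.2 hx'.1
    have heq1 : (S ∩ T) ∪ (T \ S) = T := by
      ext x
      simp only [Finset.mem_union, Finset.mem_inter, Finset.mem_sdiff]
      tauto
    rw [heq1] at h1
    have h1' : (∑ i ∈ T \ S, (g (insert i ∅) - g ∅)) ≤
        ∑ i ∈ T \ S, (g (insert i (S ∩ T)) - g (S ∩ T)) := by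
      apply Finset.sum_le_sum
      intro i hi
      apply hsup
      · exact Finset.empty_subset _
      · simp only [Finset.mem_sdiff] at hi
        simp [hi.1, hi.2]
    have heq2 : (S ∩ T) ∪ (S \ T) = S := by ext x; simp only [Finset.mem_union, Finset.mem_inter, Finset.mem_sdiff]; tauto
    have h2 : g S - g (S ∩ T) ≤
        ∑ i ∈ S \ T, (g (insert i (S \ {i})) - g (S \ {i})) := by
      have := ub_aux g hsup (S \ T) (S ∩ T) (by
        rw [Finset.disjoint_left]
        intro x hx hx'
        simp only [Finset.mem_sdiff, Finset.mem_inter] at *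
        exact hx.2 hx'.2)
      rw [heq2] at this
      exact this
    linarith
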